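/- Let X be a set, |·| : X → [0,∞) a function, and let p : (0,∞) × X → [0,∞), (t,x) ↦ p_t(x), be such that t ↦ p_t(x) is measurable for each x. Assume the Davies–Gaffney type short time bound: there are C₀ > 0 and κ ∈ [0, ξ(1)) such that p_t(x) ≤ C₀·e^{κ|x|}·exp(−t·ξ(|x|/t)) for all t > 0 and x ∈ X, where ξ(r) = r·arsinh(r) + 1 − √(1+r²). Then for every bounded interval I ⊆ (0,∞) there are constants c, C > 0 such that for every α ∈ I and every x ∈ X with |x| > 0, ∫₀^{|x|} p_t(x)·t^{α−1} dt ≤ (C/α)·e^{−c|x|}. -/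

import Mathlib

open Filter MeasureTheory Topology
open scoped ENNReal NNReal

noncomputable section

namespace HG

variable {X : Type*}

open scoped Classical

/-- `f` has finite support (membership in `C_c(X)`). -/
def FinSupp (f : X → ℝ) : Prop := (Function.support f).Finite

/-- Membership in `𝓕`. -/
def MemF (b : X → X → ℝ) (f : X → ℝ) : Prop :=
  ∀ x : X, Summable fun y => b x y * |f y|

/-- The formal Laplacian `𝓛`. -/
def lap (b : X → X → ℝ) (c m : X → ℝ) (f : X → ℝ) (x : X) : ℝ :=
  (1 / m x) * ∑' y, b x y * (f x - f y) + (c x / m x) * f x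

/-- The energy form `𝓠`, valued in `ℝ≥0∞`. -/
def energy (b : X → X → ℝ) (c : X → ℝ) (f : X → ℝ) : ℝ≥0∞ :=
  (1 / 2) * ∑' x, ∑' y, ENNReal.ofReal (b x y * (f x - f y) ^ 2)
    + ∑' x, ENNReal.ofReal (c x * f x ^ 2)

/-- Membership in `𝓓`, the functions of finite energy. -/
def MemD (b : X → X → ℝ) (c : X → ℝ) (f : X → ℝ) : Prop := energy b c f < ⊤

/-- Membership in `𝓓₀`, the closure of `C_c(X)` w.r.t. `‖f‖_o = (𝓠(f)+f(o)²)^{1/2}`. -/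
def MemD0 (b : X → X → ℝ) (c : X → ℝ) (o : X) (f : X → ℝ) : Prop :=
  ∃ φ : ℕ → X → ℝ, (∀ n, FinSupp (φ n)) ∧
    Tendsto (fun n => energy b c (fun x => f x - φ n x)
      + ENNReal.ofReal ((f o - φ n o) ^ 2)) atTop (nhds 0)

/-- `(b,c)` is a connected graph over `(X,m)`. -/
structure IsGraph (b : X → X → ℝ) (c m : X → ℝ) : Prop where
  symm : ∀ x y, b x y = b y x
  nonneg : ∀ x y, 0 ≤ b x y
  loopless : ∀ x, b x x = 0
  deg_summable : ∀ x, Summable fun y => b x y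
  c_nonneg : ∀ x, 0 ≤ c x
  m_pos : ∀ x, 0 < m x
  connected : ∀ x y : X, ∃ (k : ℕ) (p : ℕ → X), p 0 = x ∧ p k = y ∧
    ∀ i < k, 0 < b (p i) (p (i + 1))

/-- `u` is superharmonic: `u ∈ 𝓕` and `𝓛u ≥ 0`. -/
def Superharmonic (b : X → X → ℝ) (c m : X → ℝ) (u : X → ℝ) : Prop :=
  MemF b u ∧ ∀ x, 0 ≤ lap b c m u x

/-- `u` is subharmonic: `u ∈ 𝓕` and `𝓛u ≤ 0`. -/
def Subharmonic (b : X → X → ℝ) (c m : X → ℝ) (u : X → ℝ) : Prop :=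
  MemF b u ∧ ∀ x, lap b c m u x ≤ 0

/-- The Green operator `Gk(x) = ∑_y G(x,y) k(y)`. -/
def Gop (G : X → X → ℝ) (k : X → ℝ) (x : X) : ℝ := ∑' y, G x y * k y

/-- Membership in `𝓖`, the domain of the Green operator. -/
def MemG (G : X → X → ℝ) (k : X → ℝ) : Prop :=
  ∀ x, Summable fun y => G x y * |k y|

/-- `u` is a potential: `u ∈ 𝓕`, `𝓛u ∈ 𝓖` and `u = G𝓛u`. -/
def IsPotential (b : X → X → ℝ) (c m : X → ℝ) (G : X → X → ℝ) (u : X → ℝ) : Prop :=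
  MemF b u ∧ MemG G (lap b c m u) ∧ u = Gop G (lap b c m u)

/-- Membership in `𝓖₂ = {k ∈ 𝓖 : ∑_x m(x)|k(x)| (G|k|)(x) < ∞}`. -/
def MemG2 (m : X → ℝ) (G : X → X → ℝ) (k : X → ℝ) : Prop :=
  MemG G k ∧ Summable fun x => m x * |k x| * Gop G (fun y => |k y|) x

/-- `G` is the Green function of the (transient) graph `(b,c)` over `(X,m)`:
for every `y`, `G(·,y)` is the unique function in `𝓓₀ ∩ 𝓕` with `𝓛 G(·,y) = 1_y`;
it is strictly positive and symmetric. -/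
structure IsGreen (b : X → X → ℝ) (c m : X → ℝ) (o : X) (G : X → X → ℝ) : Prop where
  pos : ∀ x y, 0 < G x y
  symm : ∀ x y, G x y = G y x
  memF : ∀ y, MemF b fun x => G x y
  memD0 : ∀ y, MemD0 b c o fun x => G x y
  lap_eq : ∀ y x, lap b c m (fun z => G z y) x = if x = y then 1 else 0
  unique : ∀ (y : X) (u : X → ℝ), MemF b u → MemD0 b c o u →
    (∀ x, lap b c m u x = if x = y then 1 else 0) → u = fun x => G x y

/-- `w(φ) = ∑_x m(x) w(x) φ(x)²`. -/
def wsum (m w φ : X → ℝ) : ℝ := ∑' x, m x * w x * φ x ^ 2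

/-- `w` is a Hardy type weight: `𝓠(φ) ≥ ∑_x m(x) w(x) φ(x)²` for all `φ ∈ C_c(X)`. -/
def IsHardyType (b : X → X → ℝ) (c m w : X → ℝ) : Prop :=
  ∀ φ : X → ℝ, FinSupp φ → ENNReal.ofReal (wsum m w φ) ≤ energy b c φ

/-- `w` is a Hardy weight: a non-negative Hardy type weight. -/
def IsHardy (b : X → X → ℝ) (c m w : X → ℝ) : Prop :=
  (∀ x, 0 ≤ w x) ∧ IsHardyType b c m w

/-- A Hardy weight is critical if the only Hardy weight above it is itself. -/
def IsCriticalHardy (b : X → X → ℝ) (c m w : X → ℝ) : Prop :=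
  IsHardy b c m w ∧ ∀ w', IsHardy b c m w' → (∀ x, w x ≤ w' x) → w' = w

/-- A Hardy type weight is critical if the only Hardy type weight above it is itself. -/
def IsCriticalHardyType (b : X → X → ℝ) (c m w : X → ℝ) : Prop :=
  IsHardyType b c m w ∧ ∀ w', IsHardyType b c m w' → (∀ x, w x ≤ w' x) → w' = w

/-- A ground state of `w`: a strictly positive `v ∈ 𝓕` with `𝓛v = wv`. -/
def IsGroundState (b : X → X → ℝ) (c m w v : X → ℝ) : Prop :=
  MemF b v ∧ (∀ x, 0 < v x) ∧ ∀ x, lap b c m v x = w x * v x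

/-- A ground state of `w` obtained as pointwise limit of a null sequence. -/
def IsGroundStateSeq (b : X → X → ℝ) (c m w v : X → ℝ) : Prop :=
  IsGroundState b c m w v ∧
  ∃ e : ℕ → X → ℝ, (∀ n, FinSupp (e n)) ∧
    Tendsto (fun n => (energy b c (e n)).toReal - wsum m w (e n)) atTop (nhds 0) ∧
    ∀ x, Tendsto (fun n => e n x) atTop (nhds (v x))

/-- Membership in `C₀(X)`, functions vanishing at infinity. -/
def MemC0 (f : X → ℝ) : Prop := ∀ ε : ℝ, 0 < ε → {x | ε ≤ |f x|}.Finite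

/-- The function `ξ(r) = r·arsinh(r) + 1 − √(1+r²)`. -/
def xi (r : ℝ) : ℝ := r * Real.arsinh r + 1 - Real.sqrt (1 + r ^ 2)

private lemma hasDerivAt_gfun (r : ℝ) :
    HasDerivAt (fun r : ℝ => r * Real.arsinh r - Real.sqrt (1 + r ^ 2) - r * Real.arsinh 1)
      (Real.arsinh r - Real.arsinh 1) r := by
  have h0 : (0:ℝ) < 1 + r ^ 2 := by positivity
  have hs : Real.sqrt (1 + r ^ 2) ≠ 0 := by positivity
  have h1 : HasDerivAt (fun r : ℝ => r * Real.arsinh r)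
      (1 * Real.arsinh r + r * (Real.sqrt (1 + r ^ 2))⁻¹) r :=
    (hasDerivAt_id r).mul (Real.hasDerivAt_arsinh r)
  have h2 : HasDerivAt (fun r : ℝ => 1 + r ^ 2) (2 * r) r := by
    simpa using (hasDerivAt_pow 2 r).const_add 1
  have h3 : HasDerivAt (fun r : ℝ => Real.sqrt (1 + r ^ 2))
      (1 / (2 * Real.sqrt (1 + r ^ 2)) * (2 * r)) r :=
    (Real.hasDerivAt_sqrt h0.ne').comp r h2
  have h4 : HasDerivAt (fun r : ℝ => r * Real.arsinh 1) (Real.arsinh 1) r :=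
    hasDerivAt_mul_const _
  refine ((h1.sub h3).sub h4).congr_deriv ?_
  field_simp
  ring

lemma xi_one_mul_le {r : ℝ} (hr : 1 ≤ r) : r * xi 1 ≤ xi r := by
  set g : ℝ → ℝ := fun r => r * Real.arsinh r - Real.sqrt (1 + r ^ 2) - r * Real.arsinh 1 with hg
  have hmono : MonotoneOn g (Set.Ici 1) := by
    apply monotoneOn_of_deriv_nonneg (convex_Ici 1)
    · exact (Differentiable.continuous fun r => (hasDerivAt_gfun r).differentiableAt).continuousOn
    · exact fun r _ => ((hasDerivAt_gfun r).differentiableAt).differentiableWithinAt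
    · intro r hr'
      rw [interior_Ici] at hr'
      rw [(hasDerivAt_gfun r).deriv]
      have : Real.arsinh 1 ≤ Real.arsinh r := Real.arsinh_le_arsinh.mpr (le_of_lt hr')
      linarith
  have hkey : g 1 ≤ g r := hmono (by simp) hr hr
  have hg1 : g 1 = -Real.sqrt 2 := by
    simp only [hg]
    norm_num
  have h2 : (1:ℝ) ≤ Real.sqrt 2 := by
    rw [show (1:ℝ) = Real.sqrt 1 by simp]
    exact Real.sqrt_le_sqrt (by norm_num)
  rw [hg1, hg] at hkey
  simp only at hkey
  have hs2 : Real.sqrt (1 + 1 ^ 2) = Real.sqrt 2 := by norm_num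
  simp only [xi, hs2, one_mul]
  nlinarith [hkey, hr, h2]

/-- Proposition 4.6, short time upper bounds. Assume the
Davies–Gaffney type bound `p_t(x) ≤ C₀ e^{κ|x|} exp(−t ξ(|x|/t))` with
`0 ≤ κ < ξ(1)`. Then for every bounded interval `I ⊆ (0,∞)` there are
`c, C > 0` such that for all `α ∈ I` and `x` with `|x| > 0`,
`∫₀^{|x|} p_t(x) t^{α−1} dt ≤ (C/α) e^{−c|x|}`. -/
theorem stmt18 {X : Type*} (n : X → ℝ) (hn : ∀ x, 0 ≤ n x)
    (p : ℝ → X → ℝ) (hmeas : ∀ x, Measurable fun t => p t x)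
    (hpos : ∀ t : ℝ, 0 < t → ∀ x, 0 ≤ p t x)
    (C₀ κ : ℝ) (hC₀ : 0 < C₀) (hκ0 : 0 ≤ κ) (hκ1 : κ < xi 1)
    (hbound : ∀ t : ℝ, 0 < t → ∀ x,
      p t x ≤ C₀ * Real.exp (κ * n x) * Real.exp (-t * xi (n x / t))) :
    ∀ A B : ℝ, 0 < A →
      ∃ c C : ℝ, 0 < c ∧ 0 < C ∧ ∀ α ∈ Set.Icc A B, ∀ x, 0 < n x →
        (∫⁻ t in Set.Ioo (0 : ℝ) (n x), ENNReal.ofReal (p t x * t ^ (α - 1))) ≤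
          ENNReal.ofReal (C / α * Real.exp (-c * n x)) := by
  intro A B hA
  set c : ℝ := (xi 1 - κ) / 2 with hcdef
  have hcpos : 0 < c := by simp only [hcdef]; linarith
  set N : ℕ := ⌈B⌉₊ with hNdef
  set M : ℝ := 1 + (N.factorial : ℝ) * (2 / c) ^ N with hMdef
  have hM1 : 1 ≤ M := by
    have : (0:ℝ) ≤ (N.factorial : ℝ) * (2 / c) ^ N := by positivity
    simp only [hMdef]; linarith
  have hMpos : 0 < M := lt_of_lt_of_le one_pos hM1
  refine ⟨c, C₀ * M, hcpos, by positivity, ?_⟩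
  intro α hα x hx
  set s : ℝ := n x with hsdef
  have hα0 : 0 < α := lt_of_lt_of_le hA hα.1
  -- pointwise bound
  set K : ℝ := C₀ * Real.exp (-(2 * c) * s) with hKdef
  have hK0 : 0 ≤ K := by positivity
  have hpt : ∀ t ∈ Set.Ioo (0:ℝ) s, p t x ≤ K := by
    intro t ht
    obtain ⟨ht0, hts⟩ := ht
    have hr1 : 1 ≤ s / t := (one_le_div ht0).mpr hts.le
    have h1 : (s / t) * xi 1 ≤ xi (s / t) := xi_one_mul_le hr1
    have h2 : s * xi 1 ≤ t * xi (s / t) := by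
      have := mul_le_mul_of_nonneg_left h1 ht0.le
      calc s * xi 1 = t * ((s / t) * xi 1) := by field_simp
        _ ≤ t * xi (s / t) := this
    have h3 : Real.exp (-t * xi (s / t)) ≤ Real.exp (-(xi 1) * s) := by
      apply Real.exp_le_exp.mpr; nlinarith
    calc p t x ≤ C₀ * Real.exp (κ * s) * Real.exp (-t * xi (s / t)) := hbound t ht0 x
      _ ≤ C₀ * Real.exp (κ * s) * Real.exp (-(xi 1) * s) := by
          apply mul_le_mul_of_nonneg_left h3 (by positivity)
      _ = K := by
          rw [hKdef, mul_assoc, ← Real.exp_add]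
          congr 2
          simp only [hcdef]; ring
  have step1 : (∫⁻ t in Set.Ioo (0 : ℝ) s, ENNReal.ofReal (p t x * t ^ (α - 1))) ≤
      ∫⁻ t in Set.Ioo (0 : ℝ) s, ENNReal.ofReal (K * t ^ (α - 1)) := by
    apply setLIntegral_mono' measurableSet_Ioo
    intro t ht
    exact ENNReal.ofReal_le_ofReal
      (mul_le_mul_of_nonneg_right (hpt t ht) (Real.rpow_nonneg ht.1.le _))
  have hInt : MeasureTheory.IntegrableOn (fun t : ℝ => t ^ (α - 1)) (Set.Ioo 0 s) :=
    ((intervalIntegral.intervalIntegrable_rpow' (a := 0) (b := s)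
      (by linarith)).1).mono_set Set.Ioo_subset_Ioc_self
  have hJ : (∫⁻ t in Set.Ioo (0 : ℝ) s, ENNReal.ofReal (t ^ (α - 1)))
      = ENNReal.ofReal (s ^ α / α) := by
    rw [← MeasureTheory.ofReal_integral_eq_lintegral_ofReal hInt ?_]
    · congr 1
      rw [← MeasureTheory.integral_Ioc_eq_integral_Ioo,
        ← intervalIntegral.integral_of_le hx.le,
        integral_rpow (Or.inl (by linarith))]
      have hα1 : α - 1 + 1 = α := by ring
      rw [hα1, Real.zero_rpow hα0.ne', sub_zero]
    · filter_upwards [ae_restrict_mem measurableSet_Ioo] with t ht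
      exact Real.rpow_nonneg ht.1.le _
  have step2 : (∫⁻ t in Set.Ioo (0 : ℝ) s, ENNReal.ofReal (K * t ^ (α - 1)))
      = ENNReal.ofReal (K * (s ^ α / α)) := by
    simp_rw [ENNReal.ofReal_mul hK0]
    rw [lintegral_const_mul' _ _ ENNReal.ofReal_ne_top, hJ, ← ENNReal.ofReal_mul hK0]
  -- key real estimate
  have hKey : s ^ α * Real.exp (-c * s) ≤ M := by
    rcases le_or_gt s 1 with h | h
    · have h1 : s ^ α ≤ 1 := Real.rpow_le_one hx.le h hα0.le
      have h2 : Real.exp (-c * s) ≤ 1 := Real.exp_le_one_iff.mpr (by nlinarith)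
      have h3 : 0 ≤ s ^ α := Real.rpow_nonneg hx.le _
      nlinarith
    · have hαN : α ≤ (N : ℝ) := le_trans hα.2 (Nat.le_ceil B)
      have h1 : s ^ α ≤ s ^ (N : ℝ) := Real.rpow_le_rpow_of_exponent_le h.le hαN
      rw [Real.rpow_natCast] at h1
      have h2 : (c * s / 2) ^ N / (N.factorial : ℝ) ≤ Real.exp (c * s / 2) :=
        Real.pow_div_factorial_le_exp _ (by positivity) N
      have hfac : (0:ℝ) < (N.factorial : ℝ) := by positivity
      have h2' : (c * s / 2) ^ N ≤ (N.factorial : ℝ) * Real.exp (c * s / 2) := by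
        rw [div_le_iff₀ hfac] at h2; linarith [h2]
      have h3 : s ^ N = (2 / c) ^ N * (c * s / 2) ^ N := by
        rw [← mul_pow]
        congr 1
        field_simp
      have h4 : s ^ N ≤ (2 / c) ^ N * ((N.factorial : ℝ) * Real.exp (c * s / 2)) := by
        rw [h3]
        exact mul_le_mul_of_nonneg_left h2' (by positivity)
      have h5 : Real.exp (c * s / 2) * Real.exp (-c * s) = Real.exp (-(c * s / 2)) := by
        rw [← Real.exp_add]; ring_nf
      have h6 : Real.exp (-(c * s / 2)) ≤ 1 := Real.exp_le_one_iff.mpr (by nlinarith)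
      have hexp0 : 0 < Real.exp (-c * s) := Real.exp_pos _
      calc s ^ α * Real.exp (-c * s) ≤ s ^ N * Real.exp (-c * s) := by
            exact mul_le_mul_of_nonneg_right h1 hexp0.le
        _ ≤ ((2 / c) ^ N * ((N.factorial : ℝ) * Real.exp (c * s / 2))) * Real.exp (-c * s) :=
            mul_le_mul_of_nonneg_right h4 hexp0.le
        _ = (N.factorial : ℝ) * (2 / c) ^ N * (Real.exp (c * s / 2) * Real.exp (-c * s)) := by
            ring
        _ = (N.factorial : ℝ) * (2 / c) ^ N * Real.exp (-(c * s / 2)) := by rw [h5]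
        _ ≤ (N.factorial : ℝ) * (2 / c) ^ N * 1 :=
            mul_le_mul_of_nonneg_left h6 (by positivity)
        _ ≤ M := by simp only [hMdef]; linarith
  have final : K * (s ^ α / α) ≤ C₀ * M / α * Real.exp (-c * s) := by
    have hKeq : K = C₀ * (Real.exp (-c * s) * Real.exp (-c * s)) := by
      rw [hKdef, ← Real.exp_add]; ring_nf
    rw [hKeq]
    calc C₀ * (Real.exp (-c * s) * Real.exp (-c * s)) * (s ^ α / α)
        = (C₀ * Real.exp (-c * s) / α) * (s ^ α * Real.exp (-c * s)) := by ring
      _ ≤ (C₀ * Real.exp (-c * s) / α) * M := mul_le_mul_of_nonneg_left hKey (by positivity)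
      _ = C₀ * M / α * Real.exp (-c * s) := by ring
  calc (∫⁻ t in Set.Ioo (0 : ℝ) s, ENNReal.ofReal (p t x * t ^ (α - 1)))
      ≤ ∫⁻ t in Set.Ioo (0 : ℝ) s, ENNReal.ofReal (K * t ^ (α - 1)) := step1
    _ = ENNReal.ofReal (K * (s ^ α / α)) := step2
    _ ≤ ENNReal.ofReal (C₀ * M / α * Real.exp (-c * s)) := ENNReal.ofReal_le_ofReal final

end HG
end
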